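/- Over a field k of characteristic p > 2, define for odd index the map τ_odd: (k[y]/(y^p)) ⊗ (k[x]/(x^p)) → (k[x]/(x^p)) ⊗ (k[y]/(y^p)) by τ_odd(y^r ⊗ x^ℓ) = ∑_{t=0}^{r} C(r,t)(1/2)^t [ℓ+1]^[t] x^{ℓ+t} ⊗ y^{r−t}. Then τ_odd is bijective with inverse x^ℓ ⊗ y^r ↦ ∑_{t=0}^{r} C(r,t)(−1/2)^t [ℓ+1]^[t] y^{r−t} ⊗ x^{ℓ+t}. -/

import Mathlib

open TensorProduct Polynomial

/-- The truncated polynomial ring `k[X]/(X^p)`. -/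
abbrev TruncPoly (k : Type*) [Field k] (p : ℕ) : Type _ :=
  Polynomial k ⧸ Ideal.span {(Polynomial.X : Polynomial k) ^ p}

/-- The generator of the truncated polynomial ring. -/
noncomputable def tgen (k : Type*) [Field k] (p : ℕ) : TruncPoly k p :=
  Ideal.Quotient.mk _ Polynomial.X

section Aux

variable {k : Type*} [Field k] {p : ℕ}

lemma tgen_pow_eq_zero {m : ℕ} (hm : p ≤ m) : (tgen k p) ^ m = 0 := by
  have h1 : (tgen k p) ^ m =
      Ideal.Quotient.mk (Ideal.span {(Polynomial.X : Polynomial k) ^ p}) (X ^ m) := by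
    simp [tgen, map_pow]
  rw [h1, Ideal.Quotient.eq_zero_iff_mem]
  exact Ideal.mem_span_singleton.mpr (pow_dvd_pow X hm)

lemma ascFactorial_add' (n a b : ℕ) :
    n.ascFactorial (a + b) = n.ascFactorial a * (n + a).ascFactorial b := by
  induction b with
  | zero => simp
  | succ b ih =>
      rw [Nat.add_succ, Nat.ascFactorial_succ, Nat.ascFactorial_succ, ih]
      ring

lemma alt_sum_choose (u : ℕ) (h0 : u ≠ 0) :
    ∑ t ∈ Finset.range (u + 1), (-1 : k) ^ t * (u.choose t : k) = 0 := by
  have hZ : ((∑ i ∈ Finset.range (u + 1), (-1) ^ i * (u.choose i : ℤ) : ℤ) : k) = 0 := by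
    rw [Int.alternating_sum_range_choose_of_ne h0]; simp
  push_cast at hZ
  exact hZ

/-- The key coefficient cancellation. -/
lemma coeff_sum_eq_zero (c : k) (r ℓ u : ℕ) (hu : u ≤ r) (h0 : u ≠ 0) :
    ∑ t ∈ Finset.range (u + 1),
      ((r.choose t : k) * c ^ t * ((ℓ + 1).ascFactorial t : k)) *
        (((r - t).choose (u - t) : k) * (-c) ^ (u - t) *
          ((ℓ + t + 1).ascFactorial (u - t) : k)) = 0 := by
  have step : ∀ t ∈ Finset.range (u + 1),
      ((r.choose t : k) * c ^ t * ((ℓ + 1).ascFactorial t : k)) *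
        (((r - t).choose (u - t) : k) * (-c) ^ (u - t) *
          ((ℓ + t + 1).ascFactorial (u - t) : k)) =
      ((r.choose u : k) * c ^ u * ((ℓ + 1).ascFactorial u : k) * (-1) ^ u) *
        ((-1 : k) ^ t * (u.choose t : k)) := by
    intro t ht
    have htu : t ≤ u := by
      simp only [Finset.mem_range] at ht; omega
    have h1 : (r.choose t : k) * ((r - t).choose (u - t) : k) =
        (r.choose u : k) * (u.choose t : k) := by
      rw [← Nat.cast_mul, ← Nat.cast_mul]
      exact congrArg (Nat.cast : ℕ → k) (Nat.choose_mul (n := r) htu).symm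
    have h2 : ((ℓ + 1).ascFactorial t : k) * ((ℓ + t + 1).ascFactorial (u - t) : k) =
        ((ℓ + 1).ascFactorial u : k) := by
      have h2' : (ℓ + 1).ascFactorial u =
          (ℓ + 1).ascFactorial t * (ℓ + t + 1).ascFactorial (u - t) := by
        have := ascFactorial_add' (ℓ + 1) t (u - t)
        rw [show t + (u - t) = u by omega] at this
        rw [this, show ℓ + 1 + t = ℓ + t + 1 by ring]
      rw [← Nat.cast_mul]
      exact congrArg (Nat.cast : ℕ → k) h2'.symm
    have h3 : (-c : k) ^ (u - t) = (-1) ^ (u - t) * c ^ (u - t) := by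
      rw [neg_pow]
    have h4 : c ^ t * c ^ (u - t) = c ^ u := by
      rw [← pow_add]; congr 1; omega
    have h5 : ((-1 : k) ^ t) * ((-1 : k) ^ t) = 1 := by
      rw [← mul_pow]; norm_num
    have h6 : (-1 : k) ^ (u - t) = (-1) ^ u * (-1) ^ t := by
      have h6' : (-1 : k) ^ (u - t) * (-1 : k) ^ t = (-1) ^ u := by
        rw [← pow_add]; congr 1; omega
      calc (-1 : k) ^ (u - t) = (-1 : k) ^ (u - t) * (((-1 : k) ^ t) * ((-1 : k) ^ t)) := by
            rw [h5, mul_one]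
        _ = ((-1 : k) ^ (u - t) * (-1 : k) ^ t) * (-1 : k) ^ t := by ring
        _ = (-1) ^ u * (-1) ^ t := by rw [h6']
    calc ((r.choose t : k) * c ^ t * ((ℓ + 1).ascFactorial t : k)) *
          (((r - t).choose (u - t) : k) * (-c) ^ (u - t) *
            ((ℓ + t + 1).ascFactorial (u - t) : k))
        = ((r.choose t : k) * ((r - t).choose (u - t) : k)) *
            (((ℓ + 1).ascFactorial t : k) * ((ℓ + t + 1).ascFactorial (u - t) : k)) *
            (c ^ t * c ^ (u - t)) * ((-1 : k) ^ (u - t)) := by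
          rw [h3]; ring
      _ = ((r.choose u : k) * (u.choose t : k)) * ((ℓ + 1).ascFactorial u : k) *
            c ^ u * ((-1) ^ u * (-1) ^ t) := by rw [h1, h2, h4, h6]
      _ = ((r.choose u : k) * c ^ u * ((ℓ + 1).ascFactorial u : k) * (-1) ^ u) *
            ((-1 : k) ^ t * (u.choose t : k)) := by ring
  rw [Finset.sum_congr rfl step, ← Finset.mul_sum, alt_sum_choose u h0, mul_zero]

/-- Abstract composition lemma: if `F` and `G` are twisting maps with opposite sign
constants, then `G ∘ F` fixes `tgen^r ⊗ tgen^ℓ`. -/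
lemma comp_fixes (c : k)
    (F G : (TruncPoly k p) ⊗[k] (TruncPoly k p) →ₗ[k] (TruncPoly k p) ⊗[k] (TruncPoly k p))
    (hF : ∀ r ℓ : ℕ, r < p → ℓ < p →
      F (((tgen k p) ^ r) ⊗ₜ[k] ((tgen k p) ^ ℓ)) =
        ∑ t ∈ Finset.range (r + 1),
          ((r.choose t : k) * c ^ t * ((ℓ + 1).ascFactorial t : k)) •
            (((tgen k p) ^ (ℓ + t)) ⊗ₜ[k] ((tgen k p) ^ (r - t))))
    (hG : ∀ ℓ r : ℕ, ℓ < p → r < p →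
      G (((tgen k p) ^ ℓ) ⊗ₜ[k] ((tgen k p) ^ r)) =
        ∑ t ∈ Finset.range (r + 1),
          ((r.choose t : k) * (-c) ^ t * ((ℓ + 1).ascFactorial t : k)) •
            (((tgen k p) ^ (r - t)) ⊗ₜ[k] ((tgen k p) ^ (ℓ + t))))
    (r ℓ : ℕ) (hr : r < p) (hℓ : ℓ < p) :
    G (F (((tgen k p) ^ r) ⊗ₜ[k] ((tgen k p) ^ ℓ))) =
      ((tgen k p) ^ r) ⊗ₜ[k] ((tgen k p) ^ ℓ) := by
  set g : TruncPoly k p := tgen k p with hg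
  -- the double-sum summand
  set h : ℕ → ℕ → (TruncPoly k p) ⊗[k] (TruncPoly k p) := fun t s =>
    (((r.choose t : k) * c ^ t * ((ℓ + 1).ascFactorial t : k)) *
      (((r - t).choose s : k) * (-c) ^ s * ((ℓ + t + 1).ascFactorial s : k))) •
      ((g ^ (r - t - s)) ⊗ₜ[k] (g ^ (ℓ + t + s))) with hh
  have step1 : ∀ t ∈ Finset.range (r + 1),
      G (((r.choose t : k) * c ^ t * ((ℓ + 1).ascFactorial t : k)) •
          ((g ^ (ℓ + t)) ⊗ₜ[k] (g ^ (r - t)))) =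
        ∑ s ∈ Finset.range ((r + 1) - t), h t s := by
    intro t ht
    have htr : t ≤ r := by simp only [Finset.mem_range] at ht; omega
    have hrange : (r + 1) - t = (r - t) + 1 := by omega
    rw [map_smul, hrange]
    rcases lt_or_ge (ℓ + t) p with hlt | hge
    · rw [hG (ℓ + t) (r - t) hlt (by omega), Finset.smul_sum]
      refine Finset.sum_congr rfl fun s hs => ?_
      rw [hh]
      simp only [smul_smul]
    · have hz : g ^ (ℓ + t) = 0 := tgen_pow_eq_zero hge
      rw [hz, zero_tmul, G.map_zero, smul_zero]
      symm
      refine Finset.sum_eq_zero fun s _ => ?_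
      rw [hh]
      simp only
      rw [tgen_pow_eq_zero (show p ≤ ℓ + t + s by omega), tmul_zero, smul_zero]
  have main : G (F ((g ^ r) ⊗ₜ[k] (g ^ ℓ))) =
      ∑ u ∈ Finset.range (r + 1), ∑ t ∈ Finset.range (u + 1), h t (u - t) := by
    rw [hF r ℓ hr hℓ, map_sum, Finset.sum_congr rfl step1,
      ← Finset.sum_range_diag_flip (r + 1) h]
  rw [main]
  rw [Finset.sum_eq_single_of_mem 0 (Finset.mem_range.mpr (by omega))]
  · simp [hh, Nat.ascFactorial_zero]
  · intro u hu hu0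
    have hur : u ≤ r := by simp only [Finset.mem_range] at hu; omega
    have inner : ∀ t ∈ Finset.range (u + 1), h t (u - t) =
        (((r.choose t : k) * c ^ t * ((ℓ + 1).ascFactorial t : k)) *
          (((r - t).choose (u - t) : k) * (-c) ^ (u - t) *
            ((ℓ + t + 1).ascFactorial (u - t) : k))) •
          ((g ^ (r - u)) ⊗ₜ[k] (g ^ (ℓ + u))) := by
      intro t ht
      have htu : t ≤ u := by simp only [Finset.mem_range] at ht; omega
      rw [hh]
      simp only
      rw [show r - t - (u - t) = r - u by omega, show ℓ + t + (u - t) = ℓ + u by omega]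
    rw [Finset.sum_congr rfl inner, ← Finset.sum_smul,
      coeff_sum_eq_zero c r ℓ u hur hu0, zero_smul]

end Aux

/-- The odd-index twisting map
`τ_odd(y^r ⊗ x^ℓ) = ∑_t C(r,t)(1/2)^t [ℓ+1]^[t] x^{ℓ+t} ⊗ y^{r−t}` is bijective with
inverse `x^ℓ ⊗ y^r ↦ ∑_t C(r,t)(−1/2)^t [ℓ+1]^[t] y^{r−t} ⊗ x^{ℓ+t}`. -/
theorem stmt14 (k : Type*) [Field k] (p : ℕ) (hp : p.Prime) (hp2 : 2 < p) [CharP k p]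
    (τ : (TruncPoly k p) ⊗[k] (TruncPoly k p) →ₗ[k] (TruncPoly k p) ⊗[k] (TruncPoly k p))
    (σ : (TruncPoly k p) ⊗[k] (TruncPoly k p) →ₗ[k] (TruncPoly k p) ⊗[k] (TruncPoly k p))
    (hτ : ∀ r ℓ : ℕ, r < p → ℓ < p →
      τ (((tgen k p) ^ r) ⊗ₜ[k] ((tgen k p) ^ ℓ)) =
        ∑ t ∈ Finset.range (r + 1),
          ((r.choose t : k) * (2 : k)⁻¹ ^ t * ((ℓ + 1).ascFactorial t : k)) •
            (((tgen k p) ^ (ℓ + t)) ⊗ₜ[k] ((tgen k p) ^ (r - t))))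
    (hσ : ∀ ℓ r : ℕ, ℓ < p → r < p →
      σ (((tgen k p) ^ ℓ) ⊗ₜ[k] ((tgen k p) ^ r)) =
        ∑ t ∈ Finset.range (r + 1),
          ((r.choose t : k) * (-(2 : k)⁻¹) ^ t * ((ℓ + 1).ascFactorial t : k)) •
            (((tgen k p) ^ (r - t)) ⊗ₜ[k] ((tgen k p) ^ (ℓ + t)))) :
    Function.Bijective τ ∧ σ.comp τ = LinearMap.id ∧ τ.comp σ = LinearMap.id := by
  -- σ ∘ τ fixes basis vectors
  have hστ : ∀ r ℓ : ℕ, r < p → ℓ < p →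
      σ (τ (((tgen k p) ^ r) ⊗ₜ[k] ((tgen k p) ^ ℓ))) =
        ((tgen k p) ^ r) ⊗ₜ[k] ((tgen k p) ^ ℓ) :=
    comp_fixes ((2 : k)⁻¹) τ σ hτ hσ
  -- τ ∘ σ fixes basis vectors, via the commutor trick
  have hτσ : ∀ ℓ r : ℕ, ℓ < p → r < p →
      τ (σ (((tgen k p) ^ ℓ) ⊗ₜ[k] ((tgen k p) ^ r))) =
        ((tgen k p) ^ ℓ) ⊗ₜ[k] ((tgen k p) ^ r) := by
    set cm : (TruncPoly k p) ⊗[k] (TruncPoly k p) →ₗ[k] (TruncPoly k p) ⊗[k] (TruncPoly k p) :=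
      (TensorProduct.comm k (TruncPoly k p) (TruncPoly k p)).toLinearMap with hcm
    have cm_tmul : ∀ a b : TruncPoly k p, cm (a ⊗ₜ[k] b) = b ⊗ₜ[k] a := fun a b => rfl
    have cm_cm : ∀ x, cm (cm x) = x := fun x => by
      refine x.induction_on ?_ ?_ ?_
      · rw [cm.map_zero, cm.map_zero]
      · intro a b; rw [cm_tmul, cm_tmul]
      · intro a b ha hb; rw [map_add, map_add, ha, hb]
    set F := cm ∘ₗ σ ∘ₗ cm with hFdef
    set G := cm ∘ₗ τ ∘ₗ cm with hGdef
    have hF : ∀ r ℓ : ℕ, r < p → ℓ < p →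
        F (((tgen k p) ^ r) ⊗ₜ[k] ((tgen k p) ^ ℓ)) =
          ∑ t ∈ Finset.range (r + 1),
            ((r.choose t : k) * (-(2 : k)⁻¹) ^ t * ((ℓ + 1).ascFactorial t : k)) •
              (((tgen k p) ^ (ℓ + t)) ⊗ₜ[k] ((tgen k p) ^ (r - t))) := by
      intro r ℓ hr hℓ
      simp only [hFdef, LinearMap.comp_apply]
      rw [cm_tmul, hσ ℓ r hℓ hr, map_sum]
      refine Finset.sum_congr rfl fun t ht => ?_
      rw [map_smul, cm_tmul]
    have hG : ∀ ℓ r : ℕ, ℓ < p → r < p →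
        G (((tgen k p) ^ ℓ) ⊗ₜ[k] ((tgen k p) ^ r)) =
          ∑ t ∈ Finset.range (r + 1),
            ((r.choose t : k) * (-(-(2 : k)⁻¹)) ^ t * ((ℓ + 1).ascFactorial t : k)) •
              (((tgen k p) ^ (r - t)) ⊗ₜ[k] ((tgen k p) ^ (ℓ + t))) := by
      intro ℓ r hℓ hr
      simp only [hGdef, LinearMap.comp_apply, neg_neg]
      rw [cm_tmul, hτ r ℓ hr hℓ, map_sum]
      refine Finset.sum_congr rfl fun t ht => ?_
      rw [map_smul, cm_tmul]
    have key := comp_fixes (-(2 : k)⁻¹) F G hF hG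
    intro ℓ r hℓ hr
    have h1 := key r ℓ hr hℓ
    simp only [hFdef, hGdef, LinearMap.comp_apply] at h1
    rw [cm_tmul, cm_cm] at h1
    have h2 := congrArg cm h1
    rw [cm_cm, cm_tmul] at h2
    exact h2
  -- Build a basis of the tensor product
  have hfne : ((Polynomial.X : Polynomial k) ^ p) ≠ 0 := pow_ne_zero _ Polynomial.X_ne_zero
  let pb : PowerBasis k (AdjoinRoot ((Polynomial.X : Polynomial k) ^ p)) :=
    AdjoinRoot.powerBasis hfne
  have hgen : pb.gen = tgen k p := rfl
  have hdim : pb.dim = p := by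
    show ((Polynomial.X : Polynomial k) ^ p).natDegree = p
    simp [Polynomial.natDegree_X_pow]
  let B := Module.Basis.tensorProduct pb.basis pb.basis
  have hστ' : σ.comp τ = LinearMap.id := by
    apply B.ext
    rintro ⟨i, j⟩
    have hi : (i : ℕ) < p := by have := i.isLt; omega
    have hj : (j : ℕ) < p := by have := j.isLt; omega
    simp only [B, Module.Basis.tensorProduct_apply, pb.basis_eq_pow, hgen, LinearMap.comp_apply,
      LinearMap.id_apply]
    exact hστ i j hi hj
  have hτσ' : τ.comp σ = LinearMap.id := by
    apply B.ext
    rintro ⟨i, j⟩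
    have hi : (i : ℕ) < p := by have := i.isLt; omega
    have hj : (j : ℕ) < p := by have := j.isLt; omega
    simp only [B, Module.Basis.tensorProduct_apply, pb.basis_eq_pow, hgen, LinearMap.comp_apply,
      LinearMap.id_apply]
    exact hτσ i j hi hj
  refine ⟨?_, hστ', hτσ'⟩
  exact Function.bijective_iff_has_inverse.mpr
    ⟨σ, fun x => by simpa using DFunLike.congr_fun hστ' x,
      fun x => by simpa using DFunLike.congr_fun hτσ' x⟩
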